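/- The vector μ = e − (ζ⁴+1)f + (−ζ−ζ²)(e+f+y) − ζ(−e+f−x) ∈ ℂ⁴ satisfies ρ₀(μ) = ζ·μ (it is an eigenvector of ρ₀⊗ℂ with eigenvalue ζ), and ⟨μ, conj(μ)⟩ = 5(ζ²+ζ³) = 5(√5−1)/2 > 0, where ⟨·,·⟩ is the ℂ-bilinear extension of the form on U⊕V and conj denotes coordinatewise complex conjugation. -/
import Mathlib


open Matrix

/-- Gram matrix of `U ⊕ V` in the basis `e, f, x, y`, with ℂ coefficients. -/
def G₀ : Matrix (Fin 4) (Fin 4) ℂ :=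
  !![0, 1, 0, 0;
     1, 0, 0, 0;
     0, 0, 2, 1;
     0, 0, 1, -2]

/-- The ℂ-bilinear extension of the form on `U ⊕ V`: `⟨u, v⟩ = uᵀ G₀ v`. -/
noncomputable def B (u v : Fin 4 → ℂ) : ℂ := u ⬝ᵥ G₀.mulVec v

/-- The matrix of `ρ₀` (extended ℂ-linearly): `ρ₀(e) = -f`, `ρ₀(f) = -e - f - y`,
`ρ₀(x) = f - x`, `ρ₀(y) = 3f - x + y`. -/
def ρ₀ : Matrix (Fin 4) (Fin 4) ℂ :=
  !![0, -1, 0, 0;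
     -1, -1, 1, 3;
     0, 0, -1, -1;
     0, -1, 0, 1]

/-- `ζ = e^{4πi/5}`, a primitive 5th root of unity. -/
noncomputable def ζ : ℂ := Complex.exp (4 * Real.pi * Complex.I / 5)

/-- The basis vectors `e, f, x, y` of `U ⊕ V`, as complex vectors. -/
def e : Fin 4 → ℂ := ![1, 0, 0, 0]
def f : Fin 4 → ℂ := ![0, 1, 0, 0]
def x : Fin 4 → ℂ := ![0, 0, 1, 0]
def y : Fin 4 → ℂ := ![0, 0, 0, 1]

/-- `μ = e − (ζ⁴+1)f + (−ζ−ζ²)(e+f+y) − ζ(−e+f−x)`. -/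
noncomputable def μ : Fin 4 → ℂ :=
  e - (ζ ^ 4 + 1) • f + (-ζ - ζ ^ 2) • (e + f + y) - ζ • (-e + f - x)

theorem stmt12 :
    ρ₀.mulVec μ = ζ • μ ∧
    B μ (fun i => starRingEnd ℂ (μ i)) = 5 * (ζ ^ 2 + ζ ^ 3) ∧
    5 * (ζ ^ 2 + ζ ^ 3) = (↑(5 * (Real.sqrt 5 - 1) / 2) : ℂ) ∧
    0 < 5 * (Real.sqrt 5 - 1) / 2 := by
  have h5 : ζ ^ 5 = 1 := by
    rw [ζ, ← Complex.exp_nat_mul]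
    have : ((5:ℕ):ℂ) * (4 * Real.pi * Complex.I / 5) = (2:ℤ) * (2 * Real.pi * Complex.I) := by
      push_cast; ring
    rw [this, Complex.exp_int_mul_two_pi_mul_I]
  have hconj : starRingEnd ℂ ζ = ζ ^ 4 := by
    rw [ζ, ← Complex.exp_conj, ← Complex.exp_nat_mul]
    have h1 : starRingEnd ℂ (4 * Real.pi * Complex.I / 5) = -(4 * Real.pi * Complex.I / 5) := by
      simp [map_div₀, Complex.conj_I, map_ofNat]
      ring
    rw [h1,
      show ((4:ℕ):ℂ) * (4 * Real.pi * Complex.I / 5) = -(4 * Real.pi * Complex.I / 5) + (2:ℤ) * (2 * Real.pi * Complex.I) by push_cast; ring,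
      Complex.exp_add, Complex.exp_int_mul_two_pi_mul_I, mul_one]
  have hsum : 1 + ζ + ζ ^ 2 + ζ ^ 3 + ζ ^ 4 = 0 := by
    have hne : ζ ≠ 1 := by
      rw [ζ, Ne, Complex.exp_eq_one_iff]
      push_neg
      intro n hn
      have hπ : Real.pi ≠ 0 := Real.pi_ne_zero
      have : (n : ℂ) * (2 * ↑Real.pi * Complex.I) - 4 * ↑Real.pi * Complex.I / 5
          = ((2 * n - 4/5 : ℝ) : ℂ) * (↑Real.pi * Complex.I) := by push_cast; ring
      have h2 : ((2 * (n:ℝ) - 4/5 : ℝ) : ℂ) * (↑Real.pi * Complex.I) = 0 := by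
        rw [← this]; rw [hn]; ring
      have h3 : (2 * (n:ℝ) - 4/5 : ℝ) = 0 := by
        have := mul_eq_zero.mp h2
        rcases this with h | h
        · exact_mod_cast h
        · exact absurd (mul_eq_zero.mp h) (by simp [Complex.I_ne_zero, Complex.ofReal_eq_zero, hπ])
      have : (n : ℝ) = 2/5 := by linarith
      have : (2 : ℝ) / 5 = (n : ℝ) := this.symm
      have h4 : (5 : ℝ) * (n:ℝ) = 2 := by linarith
      have : (5 * n : ℤ) = (2 : ℤ) := by exact_mod_cast h4
      omega
    have hgs := geom_sum_eq hne 5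
    have h0 : (∑ i ∈ Finset.range 5, ζ ^ i) = 0 := by
      rw [hgs, h5]; simp
    calc 1 + ζ + ζ ^ 2 + ζ ^ 3 + ζ ^ 4 = ∑ i ∈ Finset.range 5, ζ ^ i := by
          rw [Finset.sum_range_succ, Finset.sum_range_succ, Finset.sum_range_succ,
            Finset.sum_range_succ, Finset.sum_range_one]
          ring
      _ = 0 := h0
  have hval : ζ ^ 2 + ζ ^ 3 = ((Real.sqrt 5 - 1) / 2 : ℝ) := by
    have h2 : ζ ^ 2 = Complex.exp (-(2 * Real.pi / 5) * Complex.I) := by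
      rw [ζ, ← Complex.exp_nat_mul,
        show ((2:ℕ):ℂ) * (4 * Real.pi * Complex.I / 5) = -(2 * Real.pi / 5) * Complex.I + (1:ℤ) * (2 * Real.pi * Complex.I) by push_cast; ring,
        Complex.exp_add, Complex.exp_int_mul_two_pi_mul_I, mul_one]
    have h3 : ζ ^ 3 = Complex.exp ((2 * Real.pi / 5) * Complex.I) := by
      rw [ζ, ← Complex.exp_nat_mul,
        show ((3:ℕ):ℂ) * (4 * Real.pi * Complex.I / 5) = (2 * Real.pi / 5) * Complex.I + (1:ℤ) * (2 * Real.pi * Complex.I) by push_cast; ring,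
        Complex.exp_add, Complex.exp_int_mul_two_pi_mul_I, mul_one]
    have hc : ζ ^ 2 + ζ ^ 3 = 2 * Complex.cos (2 * Real.pi / 5) := by
      rw [h2, h3, Complex.cos]; ring_nf
    rw [hc, show (2 * Real.pi / 5 : ℂ) = ((2 * Real.pi / 5 : ℝ) : ℂ) by push_cast; ring,
      ← Complex.ofReal_cos]
    have hr : Real.cos (2 * Real.pi / 5) = (Real.sqrt 5 - 1) / 4 := by
      have h1 := Real.cos_pi_div_five
      rw [show 2 * Real.pi / 5 = 2 * (Real.pi / 5) by ring, Real.cos_two_mul, h1]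
      have h5' : Real.sqrt 5 ^ 2 = 5 := Real.sq_sqrt (by norm_num)
      nlinarith [h5']
    rw [hr]; push_cast; ring
  have hμ : μ = ![1 - ζ ^ 2, -ζ ^ 4 - 1 - 2 * ζ - ζ ^ 2, ζ, -ζ - ζ ^ 2] := by
    funext i
    fin_cases i <;>
      simp [μ, e, f, x, y, Matrix.cons_val_zero, Matrix.cons_val_one] <;> ring
  have hsqrt5 : (1:ℝ) < Real.sqrt 5 := by
    have : (1:ℝ) = Real.sqrt 1 := (Real.sqrt_one).symm
    rw [this]
    exact Real.sqrt_lt_sqrt (by norm_num) (by norm_num)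
  refine ⟨?_, ?_, ?_, ?_⟩
  · funext i
    fin_cases i <;>
      · simp [hμ, ρ₀, Matrix.mulVec, dotProduct, Fin.sum_univ_four]
        first
          | ring1
          | linear_combination hsum
          | linear_combination ζ * hsum
  · have hμc : (fun i => starRingEnd ℂ (μ i))
        = ![1 - ζ ^ 3, -ζ - 1 - 2 * ζ ^ 4 - ζ ^ 3, ζ ^ 4, -ζ ^ 4 - ζ ^ 3] := by
      funext i
      fin_cases i <;>
          simp [hμ, map_sub, map_add, map_neg, _root_.map_mul, map_pow, _root_.map_one, map_ofNat, hconj] <;>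
          first
            | ring1
            | linear_combination ζ ^ 3 * h5
            | linear_combination (ζ ^ 11 + ζ ^ 6 + ζ + ζ ^ 3) * h5
            | linear_combination -(ζ ^ 11 + ζ ^ 6 + ζ + ζ ^ 3) * h5

    rw [hμc, hμ]
    simp [B, G₀, Matrix.mulVec, dotProduct, Fin.sum_univ_four, Matrix.vecHead, Matrix.vecTail]
    linear_combination (ζ ^ 3 - 2 * ζ ^ 2 - ζ - 2) * hsum
  · rw [hval]; push_cast; ring
  · nlinarith [hsqrt5]
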